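/- (The bilinear-interpolation symbol satisfies the V-cycle mirror-point condition with constant zero.) Let α, β ∈ (1,2), d, e, ρ > 0, and let p(θ₁,θ₂) = (1+cos θ₁)(1+cos θ₂). Then for each of the three mirror-point maps y(θ₁,θ₂) ∈ {(θ₁, π−θ₂), (π−θ₁, θ₂), (π−θ₁, π−θ₂)}, one has lim_{(θ₁,θ₂)→(0,0)} p(y(θ₁,θ₂))/𝓕_{(α,β)}(θ₁,θ₂) = 0 (where the limit is taken over (θ₁,θ₂) ≠ (0,0)); in particular also lim_{(θ₁,θ₂)→(0,0)} p(y(θ₁,θ₂))²/𝓕_{(α,β)}(θ₁,θ₂) = 0, i.e. both the two-grid condition and the stronger V-cycle condition hold with c = 0. -/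

import Mathlib

open scoped Real Topology
open Filter

/-- Alternating fractional binomial coefficients. -/
noncomputable def gcoef (γ : ℝ) (k : ℕ) : ℝ :=
  (-1 : ℝ) ^ k / (Nat.factorial k) * ∏ i ∈ Finset.range k, (γ - i)

/-- WSGD weights. -/
noncomputable def w (γ : ℝ) : ℕ → ℝ
  | 0 => γ / 2 * gcoef γ 0
  | (k + 1) => γ / 2 * gcoef γ (k + 1) + (2 - γ) / 2 * gcoef γ k

/-- The symbol `f_γ(ξ) = -∑_{k=-1}^∞ w_{k+1}^{(γ)} e^{ikξ}`. -/
noncomputable def fsym (γ : ℝ) (ξ : ℝ) : ℂ :=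
  -∑' k : ℕ, (w γ k : ℂ) * Complex.exp (Complex.I * ((k : ℂ) - 1) * (ξ : ℂ))

/-- `q_γ(ξ) = f_γ(ξ) + f_γ(-ξ)` (real-valued). -/
noncomputable def qsym (γ : ℝ) (ξ : ℝ) : ℂ := fsym γ ξ + fsym γ (-ξ)

/-- `𝓕_{(α,β)}(θ₁,θ₂) = d·q_α(θ₁) + e·ρ·q_β(θ₂)`. -/
noncomputable def Fsym (α β d e ρ : ℝ) (θ : ℝ × ℝ) : ℝ :=
  d * (qsym α θ.1).re + e * ρ * (qsym β θ.2).re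

/-- The bilinear-interpolation symbol `p(θ₁,θ₂) = (1+cos θ₁)(1+cos θ₂)`. -/
noncomputable def pfun (θ : ℝ × ℝ) : ℝ :=
  (1 + Real.cos θ.1) * (1 + Real.cos θ.2)

/-! ### Basic properties of `gcoef` -/

lemma gcoef_zero (γ : ℝ) : gcoef γ 0 = 1 := by simp [gcoef]

lemma gcoef_succ (γ : ℝ) (k : ℕ) :
    gcoef γ (k+1) = gcoef γ k * ((k : ℝ) - γ) / (k+1) := by
  unfold gcoef
  rw [Finset.prod_range_succ, Nat.factorial_succ]
  push_cast
  field_simp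
  ring

lemma gcoef_one (γ : ℝ) : gcoef γ 1 = -γ := by
  rw [show (1:ℕ) = 0 + 1 from rfl, gcoef_succ, gcoef_zero]; norm_num

lemma gcoef_two (γ : ℝ) : gcoef γ 2 = γ * (γ-1) / 2 := by
  rw [show (2:ℕ) = 1 + 1 from rfl, gcoef_succ, gcoef_one]
  norm_num; ring

lemma gcoef_shift (γ : ℝ) (n : ℕ) :
    gcoef γ (n+1) = (-γ/(n+1)) * gcoef (γ-1) n := by
  unfold gcoef
  rw [Finset.prod_range_succ', Nat.factorial_succ]
  push_cast
  have : ∀ i ∈ Finset.range n, γ - ((i:ℝ)+1) = (γ-1) - i := by intro i _; ring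
  rw [Finset.prod_congr rfl this]
  field_simp
  ring

lemma sum_gcoef (γ : ℝ) (n : ℕ) :
    ∑ k ∈ Finset.range (n+1), gcoef γ k = gcoef (γ-1) n := by
  induction n with
  | zero => simp [gcoef]
  | succ n ih =>
    rw [Finset.sum_range_succ, ih, gcoef_shift, gcoef_succ]
    have : ((n:ℝ)+1) ≠ 0 := by positivity
    field_simp
    ring

lemma gcoef_nonpos {δ : ℝ} (h0 : 0 < δ) (h1 : δ < 1) :
    ∀ n, 1 ≤ n → gcoef δ n ≤ 0 := by
  intro n hn
  induction n with
  | zero => omega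
  | succ n ih =>
    rcases Nat.eq_or_lt_of_le hn with h | h
    · rw [← h, gcoef_one]; linarith
    · have hn1 : 1 ≤ n := by omega
      have := ih hn1
      rw [gcoef_succ]
      have hk : (0:ℝ) ≤ (n:ℝ) - δ := by
        have : (1:ℝ) ≤ (n:ℝ) := by exact_mod_cast hn1
        linarith
      have hk1 : (0:ℝ) < (n:ℝ)+1 := by positivity
      apply div_nonpos_of_nonpos_of_nonneg _ (le_of_lt hk1)
      exact mul_nonpos_of_nonpos_of_nonneg this hk

lemma gcoef_pos {γ : ℝ} (h1 : 1 < γ) (h2 : γ < 2) :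
    ∀ k, 2 ≤ k → 0 < gcoef γ k := by
  intro k hk
  induction k with
  | zero => omega
  | succ k ih =>
    rcases Nat.eq_or_lt_of_le hk with h | h
    · rw [← h, gcoef_two]
      have : 0 < γ - 1 := by linarith
      positivity
    · have hk2 : 2 ≤ k := by omega
      have hg := ih hk2
      rw [gcoef_succ]
      have hkγ : (0:ℝ) < (k:ℝ) - γ := by
        have : (2:ℝ) ≤ (k:ℝ) := by exact_mod_cast hk2
        linarith
      have : (0:ℝ) < (k:ℝ)+1 := by positivity
      positivity

lemma sum_gcoef_nonpos {γ : ℝ} (h1 : 1 < γ) (h2 : γ < 2) (n : ℕ) (hn : 1 ≤ n) :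
    ∑ k ∈ Finset.range (n+1), gcoef γ k ≤ 0 := by
  rw [sum_gcoef]
  exact gcoef_nonpos (by linarith) (by linarith) n hn

lemma summable_gcoef_shift {γ : ℝ} (h1 : 1 < γ) (h2 : γ < 2) :
    Summable (fun k => gcoef γ (k+2)) := by
  apply summable_of_sum_range_le (c := γ - 1)
    (fun k => (gcoef_pos h1 h2 (k+2) (by omega)).le)
  intro n
  have h := sum_gcoef_nonpos h1 h2 (n+1) (by omega)
  have e : ∑ k ∈ Finset.range (n+2), gcoef γ k
      = (∑ k ∈ Finset.range n, gcoef γ (k+2)) + gcoef γ 1 + gcoef γ 0 := by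
    rw [Finset.sum_range_succ' (fun k => gcoef γ k) (n+1),
        Finset.sum_range_succ' (fun k => gcoef γ (k+1)) n]
  rw [show n + 1 + 1 = n + 2 from rfl, e, gcoef_zero, gcoef_one] at h
  linarith

lemma summable_abs_gcoef {γ : ℝ} (h1 : 1 < γ) (h2 : γ < 2) :
    Summable (fun k => |gcoef γ k|) := by
  rw [← summable_nat_add_iff 2]
  have : (fun k => |gcoef γ (k+2)|) = fun k => gcoef γ (k+2) := by
    funext k; exact abs_of_pos (gcoef_pos h1 h2 (k+2) (by omega))
  rw [this]
  exact summable_gcoef_shift h1 h2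

/-! ### Properties of the weights `w` -/

lemma w_zero (γ : ℝ) : w γ 0 = γ/2 := by rw [w, gcoef_zero]; ring

lemma w_succ (γ : ℝ) (k : ℕ) :
    w γ (k+1) = γ/2 * gcoef γ (k+1) + (2-γ)/2 * gcoef γ k := rfl

lemma summable_abs_w {γ : ℝ} (h1 : 1 < γ) (h2 : γ < 2) :
    Summable (fun k => |w γ k|) := by
  rw [← summable_nat_add_iff 1]
  have hs : Summable (fun k => γ/2 * |gcoef γ (k+1)| + (2-γ)/2 * |gcoef γ k|) := by
    exact (((summable_nat_add_iff 1).mpr (summable_abs_gcoef h1 h2)).mul_left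
      (γ/2)).add ((summable_abs_gcoef h1 h2).mul_left ((2-γ)/2))
  refine Summable.of_nonneg_of_le (fun k => abs_nonneg _) (fun k => ?_) hs
  rw [w_succ]
  calc |γ/2 * gcoef γ (k+1) + (2-γ)/2 * gcoef γ k|
      ≤ |γ/2 * gcoef γ (k+1)| + |(2-γ)/2 * gcoef γ k| := abs_add_le _ _
    _ = γ/2 * |gcoef γ (k+1)| + (2-γ)/2 * |gcoef γ k| := by
        rw [abs_mul, abs_mul, abs_of_pos (by linarith : (0:ℝ) < γ/2),
          abs_of_pos (by linarith : (0:ℝ) < (2-γ)/2)]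

lemma summable_w {γ : ℝ} (h1 : 1 < γ) (h2 : γ < 2) : Summable (w γ) :=
  (summable_abs_w h1 h2).of_abs

lemma sum_w_eq {γ : ℝ} (n : ℕ) : ∑ k ∈ Finset.range (n+1), w γ k
    = γ/2 * ∑ k ∈ Finset.range (n+1), gcoef γ k
      + (2-γ)/2 * ∑ k ∈ Finset.range n, gcoef γ k := by
  rw [Finset.sum_range_succ' (fun k => w γ k) n,
      Finset.sum_range_succ' (fun k => gcoef γ k) n]
  simp only [w_succ, w]
  rw [Finset.sum_add_distrib, ← Finset.mul_sum, ← Finset.mul_sum]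
  ring

lemma tsum_w_nonpos {γ : ℝ} (h1 : 1 < γ) (h2 : γ < 2) : ∑' k, w γ k ≤ 0 := by
  have h := (summable_w h1 h2).hasSum.tendsto_sum_nat
  refine le_of_tendsto h ?_
  filter_upwards [eventually_ge_atTop 3] with n hn
  obtain ⟨m, rfl⟩ : ∃ m, n = m + 1 + 1 := ⟨n - 2, by omega⟩
  rw [sum_w_eq]
  have ha := sum_gcoef_nonpos h1 h2 (m+1) (by omega)
  have hb := sum_gcoef_nonpos h1 h2 m (by omega)
  nlinarith

lemma w_tail_ge {γ : ℝ} (h1 : 1 < γ) (h2 : γ < 2) (k : ℕ) (hk : 2 ≤ k) :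
    (2-γ)/2 * gcoef γ k ≤ w γ (k+1) := by
  rw [w_succ]
  have := gcoef_pos h1 h2 (k+1) (by omega)
  nlinarith

lemma w_pos3 {γ : ℝ} (h1 : 1 < γ) (h2 : γ < 2) (k : ℕ) (hk : 2 ≤ k) :
    0 < w γ (k+1) := by
  refine lt_of_lt_of_le ?_ (w_tail_ge h1 h2 k hk)
  have := gcoef_pos h1 h2 k hk
  nlinarith

lemma w02_nonneg {γ : ℝ} (h1 : 1 < γ) (h2 : γ < 2) : 0 ≤ w γ 0 + w γ 2 := by
  rw [w_zero, show (2:ℕ) = 1 + 1 from rfl, w_succ, gcoef_two, gcoef_one]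
  nlinarith [mul_nonneg (mul_nonneg (by linarith : (0:ℝ) ≤ γ)
    (by linarith : (0:ℝ) ≤ γ - 1)) (by linarith : (0:ℝ) ≤ γ + 2)]

/-! ### Real part of the symbol -/

lemma term_rewrite {γ : ℝ} (k : ℕ) (ξ : ℝ) :
    (w γ k : ℂ) * Complex.exp (Complex.I * ((k : ℂ) - 1) * (ξ : ℂ))
      = (w γ k : ℂ) * Complex.exp ((((k:ℝ) - 1) * ξ : ℝ) * Complex.I) := by
  congr 1
  push_cast
  ring_nf

lemma summable_term {γ : ℝ} (h1 : 1 < γ) (h2 : γ < 2) (ξ : ℝ) :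
    Summable (fun k =>
      (w γ k : ℂ) * Complex.exp (Complex.I * ((k : ℂ) - 1) * (ξ : ℂ))) := by
  apply Summable.of_norm
  refine Summable.of_nonneg_of_le (fun k => norm_nonneg _) (fun k => ?_)
    (summable_abs_w h1 h2)
  rw [term_rewrite, norm_mul, Complex.norm_exp_ofReal_mul_I]
  simp [Complex.mul_im]

lemma fsym_re {γ : ℝ} (h1 : 1 < γ) (h2 : γ < 2) (ξ : ℝ) :
    (fsym γ ξ).re = -∑' k, w γ k * Real.cos (((k:ℝ) - 1) * ξ) := by
  rw [fsym, Complex.neg_re, Complex.re_tsum (summable_term h1 h2 ξ)]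
  congr 1
  apply tsum_congr
  intro k
  rw [term_rewrite]
  have : ((w γ k : ℂ) * Complex.exp ((((k:ℝ) - 1) * ξ : ℝ) * Complex.I)).re
      = w γ k * (Complex.exp ((((k:ℝ) - 1) * ξ : ℝ) * Complex.I)).re := by
    rw [Complex.mul_re, Complex.ofReal_re, Complex.ofReal_im]; ring
  rw [this, Complex.exp_ofReal_mul_I_re]

lemma summable_wcos {γ : ℝ} (h1 : 1 < γ) (h2 : γ < 2) (ξ : ℝ) :
    Summable (fun k => w γ k * Real.cos (((k:ℝ) - 1) * ξ)) := by
  apply Summable.of_abs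
  refine Summable.of_nonneg_of_le (fun k => abs_nonneg _) (fun k => ?_)
    (summable_abs_w h1 h2)
  rw [abs_mul]
  calc |w γ k| * |Real.cos (((k:ℝ)-1)*ξ)| ≤ |w γ k| * 1 :=
        mul_le_mul_of_nonneg_left (Real.abs_cos_le_one _) (abs_nonneg _)
    _ = |w γ k| := mul_one _

lemma qsym_re {γ : ℝ} (h1 : 1 < γ) (h2 : γ < 2) (ξ : ℝ) :
    (qsym γ ξ).re
      = 2 * (∑' k, w γ k * (1 - Real.cos (((k:ℝ) - 1) * ξ))) - 2 * ∑' k, w γ k := by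
  have hc : ∀ k : ℕ, Real.cos (((k:ℝ)-1) * (-ξ)) = Real.cos (((k:ℝ)-1) * ξ) := by
    intro k; rw [mul_neg, Real.cos_neg]
  have : (qsym γ ξ).re = (fsym γ ξ).re + (fsym γ (-ξ)).re := rfl
  rw [this, fsym_re h1 h2, fsym_re h1 h2]
  have e1 : (∑' k, w γ k * Real.cos (((k:ℝ)-1) * (-ξ)))
      = ∑' k, w γ k * Real.cos (((k:ℝ)-1) * ξ) := by
    apply tsum_congr; intro k; rw [hc]
  rw [e1]
  have hsub : (∑' k, w γ k * (1 - Real.cos (((k:ℝ)-1) * ξ)))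
      = (∑' k, w γ k) - ∑' k, w γ k * Real.cos (((k:ℝ)-1) * ξ) := by
    rw [← Summable.tsum_sub ((summable_abs_w h1 h2).of_abs) (summable_wcos h1 h2 ξ)]
    apply tsum_congr; intro k; ring
  rw [hsub]
  ring

/-! ### Lower bounds for the real part -/

lemma summable_u {γ : ℝ} (h1 : 1 < γ) (h2 : γ < 2) (ξ : ℝ) :
    Summable (fun k => w γ k * (1 - Real.cos (((k:ℝ) - 1) * ξ))) := by
  have : (fun k => w γ k * (1 - Real.cos (((k:ℝ) - 1) * ξ)))
      = fun k => w γ k - w γ k * Real.cos (((k:ℝ) - 1) * ξ) := by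
    funext k; ring
  rw [this]
  exact ((summable_abs_w h1 h2).of_abs).sub (summable_wcos h1 h2 ξ)

lemma u_nonneg {γ : ℝ} (h1 : 1 < γ) (h2 : γ < 2) (ξ : ℝ) (k : ℕ) :
    0 ≤ w γ (k+3) * (1 - Real.cos (((k+3:ℝ) - 1) * ξ)) := by
  have hw : 0 < w γ (k+3) := by
    have := w_pos3 h1 h2 (k+2) (by omega)
    convert this using 2
  have := Real.cos_le_one (((k+3:ℝ) - 1) * ξ)
  nlinarith

lemma head_nonneg {γ : ℝ} (h1 : 1 < γ) (h2 : γ < 2) (ξ : ℝ) :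
    0 ≤ ∑ k ∈ Finset.range 3, w γ k * (1 - Real.cos (((k:ℝ) - 1) * ξ)) := by
  rw [Finset.sum_range_succ, Finset.sum_range_succ, Finset.sum_range_one]
  norm_num [Real.cos_neg]
  have h02 := w02_nonneg h1 h2
  have hc := Real.cos_le_one ξ
  nlinarith

lemma tsum_u_ge {γ : ℝ} (h1 : 1 < γ) (h2 : γ < 2) (ξ : ℝ) (n b : ℕ) :
    ∑ i ∈ Finset.range n, w γ ((b+i)+3) * (1 - Real.cos ((((b+i)+2:ℕ):ℝ)*ξ))
      ≤ ∑' k, w γ k * (1 - Real.cos (((k:ℝ) - 1) * ξ)) := by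
  set u := fun k => w γ k * (1 - Real.cos (((k:ℝ) - 1) * ξ)) with hu
  have hsum : Summable u := summable_u h1 h2 ξ
  rw [← Summable.sum_add_tsum_nat_add 3 hsum]
  have htail : Summable (fun k => u (k+3)) := (summable_nat_add_iff 3).mpr hsum
  have hvnn : ∀ k, 0 ≤ u (k+3) := by
    intro k
    have := u_nonneg h1 h2 ξ k
    simpa [hu] using (by push_cast; convert this using 3 <;> push_cast <;> ring :
      0 ≤ u (k+3))
  have key : ∑ i ∈ Finset.range n, u ((b+i)+3) ≤ ∑' k, u (k+3) := by
    have : ∑ i ∈ Finset.range n, u ((b+i)+3)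
        = ∑ k ∈ (Finset.range n).image (fun i => b+i), u (k+3) := by
      rw [Finset.sum_image]
      intro x _ y _ h
      simp only at h
      omega
    rw [this]
    exact Summable.sum_le_tsum _ (fun k _ => hvnn k) htail
  have heq : ∀ i, w γ ((b+i)+3) * (1 - Real.cos ((((b+i)+2:ℕ):ℝ)*ξ)) = u ((b+i)+3) := by
    intro i
    simp only [hu]
    norm_num
    left
    congr 1
    push_cast
    ring
  calc ∑ i ∈ Finset.range n, w γ ((b+i)+3) * (1 - Real.cos ((((b+i)+2:ℕ):ℝ)*ξ))
      = ∑ i ∈ Finset.range n, u ((b+i)+3) := Finset.sum_congr rfl (fun i _ => heq i)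
    _ ≤ ∑' k, u (k+3) := key
    _ ≤ (∑ k ∈ Finset.range 3, u k) + ∑' k, u (k+3) := by
        have := head_nonneg h1 h2 ξ; simp only [hu] at *; linarith

lemma qsym_re_ge {γ : ℝ} (h1 : 1 < γ) (h2 : γ < 2) (ξ : ℝ) (n b : ℕ) :
    2 * ∑ i ∈ Finset.range n, w γ ((b+i)+3) * (1 - Real.cos ((((b+i)+2:ℕ):ℝ)*ξ))
      ≤ (qsym γ ξ).re := by
  rw [qsym_re h1 h2]
  have ha := tsum_u_ge h1 h2 ξ n b
  have hb := tsum_w_nonpos h1 h2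
  linarith

lemma qsym_re_nonneg {γ : ℝ} (h1 : 1 < γ) (h2 : γ < 2) (ξ : ℝ) :
    0 ≤ (qsym γ ξ).re := by
  have := qsym_re_ge h1 h2 ξ 0 0
  simpa using this

/-! ### Elementary estimates -/

lemma one_sub_cos_ge {x : ℝ} (hx0 : 0 < x) (hx2 : x ≤ 2) :
    9/32 * x^2 ≤ 1 - Real.cos x := by
  have hs : Real.sin (x/2) ^ 2 = 1/2 - Real.cos x / 2 := by
    have := Real.sin_sq_eq_half_sub (x/2)
    rwa [show 2 * (x/2) = x by ring] at this
  have hhalf : 0 < x/2 := by linarith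
  have hhalf1 : x/2 ≤ 1 := by linarith
  have hsin : 3/8 * x ≤ Real.sin (x/2) := by
    have := Real.sin_gt_sub_cube hhalf
    nlinarith [pow_le_one₀ (n := 3) (le_of_lt hhalf) hhalf1, sq_nonneg (x/2)]
  have hsq : (3/8 * x)^2 ≤ Real.sin (x/2)^2 := by
    apply sq_le_sq'
    · nlinarith
    · exact hsin
  nlinarith

lemma harmonic_lower (a n : ℕ) (ha : 1 ≤ a) :
    Real.log ((a+n : ℕ)) - Real.log a ≤ ∑ i ∈ Finset.range n, ((a+i:ℕ):ℝ)⁻¹ := by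
  have key : ∀ i ∈ Finset.range n,
      Real.log ((a+(i+1):ℕ)) - Real.log ((a+i:ℕ)) ≤ ((a+i:ℕ):ℝ)⁻¹ := by
    intro i _
    have hpos : (0:ℝ) < ((a+i:ℕ):ℝ) := by positivity
    have hpos' : (0:ℝ) < ((a+(i+1):ℕ):ℝ) := by positivity
    rw [← Real.log_div (by positivity) (by positivity)]
    have := Real.log_le_sub_one_of_pos
      (show (0:ℝ) < ((a+(i+1):ℕ):ℝ)/((a+i:ℕ):ℝ) by positivity)
    have heq : ((a+(i+1):ℕ):ℝ)/((a+i:ℕ):ℝ) - 1 = ((a+i:ℕ):ℝ)⁻¹ := by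
      push_cast
      field_simp
      ring
    linarith
  calc Real.log ((a+n:ℕ)) - Real.log a
      = ∑ i ∈ Finset.range n, (Real.log ((a+(i+1):ℕ)) - Real.log ((a+i:ℕ))) := by
        rw [Finset.sum_range_sub (fun i => Real.log ((a+i:ℕ)))]
        norm_num
    _ ≤ ∑ i ∈ Finset.range n, ((a+i:ℕ):ℝ)⁻¹ := Finset.sum_le_sum key

lemma gm3_mono {γ : ℝ} (h1 : 1 < γ) (h2 : γ < 2) {K : ℕ} (hK2 : 2 ≤ K)
    (hK5 : 5 ≤ (2-γ) * K) :
    ∀ m, K ≤ m → gcoef γ K * (K:ℝ)^3 ≤ gcoef γ m * (m:ℝ)^3 := by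
  intro m hm
  induction m with
  | zero => omega
  | succ m ih =>
    rcases Nat.eq_or_lt_of_le hm with h | h
    · rw [h]
    · have hm' : K ≤ m := by omega
      have hle := ih hm'
      have hm2 : (2:ℝ) ≤ (m:ℝ) := by exact_mod_cast le_trans hK2 hm'
      have hm5 : (5:ℝ) ≤ (2-γ) * m := by
        calc (5:ℝ) ≤ (2-γ) * K := hK5
          _ ≤ (2-γ) * m := by
              apply mul_le_mul_of_nonneg_left _ (by linarith)
              exact_mod_cast hm'
      have hgm : 0 < gcoef γ m := gcoef_pos h1 h2 m (by omega)
      have step : gcoef γ m * (m:ℝ)^3 ≤ gcoef γ (m+1) * ((m:ℝ)+1)^3 := by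
        rw [gcoef_succ]
        have hm1 : (0:ℝ) < (m:ℝ)+1 := by linarith
        rw [div_mul_eq_mul_div, le_div_iff₀ hm1]
        have h5m : 5*(m:ℝ) ≤ (2-γ)*m*m :=
          le_trans (by linarith) (mul_le_mul_of_nonneg_right hm5 (by linarith))
        have key : (m:ℝ)^3 * ((m:ℝ)+1) ≤ ((m:ℝ) - γ) * ((m:ℝ)+1)^3 := by nlinarith
        calc gcoef γ m * (m:ℝ)^3 * ((m:ℝ)+1)
            = gcoef γ m * ((m:ℝ)^3 * ((m:ℝ)+1)) := by ring
          _ ≤ gcoef γ m * (((m:ℝ) - γ) * ((m:ℝ)+1)^3) :=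
              mul_le_mul_of_nonneg_left key hgm.le
          _ = gcoef γ m * ((m:ℝ) - γ) * ((m:ℝ)+1)^3 := by ring
      calc gcoef γ K * (K:ℝ)^3 ≤ gcoef γ m * (m:ℝ)^3 := hle
        _ ≤ gcoef γ (m+1) * ((m:ℝ)+1)^3 := step
        _ = gcoef γ (m+1) * (((m+1:ℕ)):ℝ)^3 := by push_cast; ring

/-! ### The logarithmic lower bound for `q_γ` -/

lemma qsym_lower {γ : ℝ} (h1 : 1 < γ) (h2 : γ < 2) :
    ∃ c : ℝ, 0 < c ∧ ∃ δ : ℝ, 0 < δ ∧ δ ≤ 1/2 ∧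
      ∀ ξ : ℝ, 0 < ξ → ξ ≤ δ → c * (ξ^2 * Real.log (1/ξ)) ≤ (qsym γ ξ).re := by
  set K : ℕ := max 2 ⌈5/(2-γ)⌉₊ with hK
  have hK2 : 2 ≤ K := le_max_left _ _
  have h2γ : (0:ℝ) < 2 - γ := by linarith
  have hK5 : (5:ℝ) ≤ (2-γ) * K := by
    have hceil : 5/(2-γ) ≤ (⌈5/(2-γ)⌉₊ : ℝ) := Nat.le_ceil _
    have : (⌈5/(2-γ)⌉₊ : ℝ) ≤ (K:ℝ) := by exact_mod_cast le_max_right 2 ⌈5/(2-γ)⌉₊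
    have h5 : 5/(2-γ) ≤ (K:ℝ) := le_trans hceil this
    calc (5:ℝ) = (2-γ) * (5/(2-γ)) := by field_simp
      _ ≤ (2-γ) * K := mul_le_mul_of_nonneg_left h5 h2γ.le
  set c₀ : ℝ := gcoef γ K * (K:ℝ)^3 with hc₀def
  have hKpos : (0:ℝ) < (K:ℝ) := by positivity
  have hc₀ : 0 < c₀ := by
    apply mul_pos (gcoef_pos h1 h2 K hK2)
    positivity
  refine ⟨9/64 * (2-γ) * c₀, by positivity, min (((K:ℝ)^2)⁻¹) (1/2),
    lt_min (by positivity) (by norm_num), min_le_right _ _, ?_⟩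
  intro ξ hξ0 hξδ
  set N : ℕ := ⌊1/ξ⌋₊ with hN
  have hinv : (0:ℝ) < 1/ξ := by positivity
  have hξK : (K:ℝ)^2 ≤ 1/ξ := by
    have hξ : ξ ≤ (((K:ℝ)^2))⁻¹ := le_trans hξδ (min_le_left _ _)
    rw [le_div_iff₀ hξ0] at *
    have := mul_le_mul_of_nonneg_left hξ (by positivity : (0:ℝ) ≤ (K:ℝ)^2)
    rw [mul_inv_cancel₀ (by positivity : ((K:ℝ)^2) ≠ 0)] at this
    linarith [this]
  have hNK : K ≤ N := by
    apply Nat.le_floor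
    calc (K:ℝ) ≤ (K:ℝ)^2 := by nlinarith
      _ ≤ 1/ξ := hξK
  have hNξ : (N:ℝ) * ξ ≤ 1 := by
    have := Nat.floor_le hinv.le
    calc (N:ℝ) * ξ ≤ (1/ξ) * ξ := mul_le_mul_of_nonneg_right this hξ0.le
      _ = 1 := by field_simp
  have hlogN : Real.log (1/ξ) ≤ Real.log ((N:ℝ)+1) := by
    apply Real.log_le_log hinv
    exact (Nat.lt_floor_add_one (1/ξ)).le
  have hlogK : 2 * Real.log K ≤ Real.log (1/ξ) := by
    have := Real.log_le_log (by positivity : (0:ℝ) < (K:ℝ)^2) hξK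
    rwa [Real.log_pow, Nat.cast_ofNat] at this
  set n : ℕ := N - K + 1 with hn
  set b : ℕ := K - 2 with hb
  have hsum := qsym_re_ge h1 h2 ξ n b
  have hterm : ∀ i ∈ Finset.range n,
      9/64 * (2-γ) * c₀ * ξ^2 * ((K+i:ℕ):ℝ)⁻¹
        ≤ w γ ((b+i)+3) * (1 - Real.cos ((((b+i)+2:ℕ):ℝ)*ξ)) := by
    intro i hi
    rw [Finset.mem_range] at hi
    set m : ℕ := K + i with hm
    have hbm2 : (b+i)+2 = m := by omega
    have hbm3 : (b+i)+3 = m+1 := by omega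
    rw [hbm2, hbm3]
    have hm2 : 2 ≤ m := by omega
    have hmN : m ≤ N := by omega
    have hmpos : (0:ℝ) < (m:ℝ) := by positivity
    have hmξ0 : 0 < (m:ℝ)*ξ := by positivity
    have hmξ2 : (m:ℝ)*ξ ≤ 2 := by
      have hc : (m:ℝ) ≤ (N:ℝ) := by exact_mod_cast hmN
      nlinarith
    have hcos := one_sub_cos_ge hmξ0 hmξ2
    have hcos0 : 0 ≤ 1 - Real.cos ((m:ℝ)*ξ) := by nlinarith
    have hw := w_tail_ge h1 h2 m hm2
    have hgK := gm3_mono h1 h2 hK2 hK5 m (by omega)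
    have hg : c₀/(m:ℝ)^3 ≤ gcoef γ m := by
      rw [div_le_iff₀ (by positivity)]
      exact hgK
    calc 9/64 * (2-γ) * c₀ * ξ^2 * ((m:ℕ):ℝ)⁻¹
        = ((2-γ)/2 * (c₀/(m:ℝ)^3)) * (9/32 * ((m:ℝ)*ξ)^2) := by
          field_simp
          ring
      _ ≤ ((2-γ)/2 * gcoef γ m) * (1 - Real.cos ((m:ℝ)*ξ)) := by
          apply mul_le_mul _ hcos (by positivity) _
          · apply mul_le_mul_of_nonneg_left hg (by linarith)
          · have := gcoef_pos h1 h2 m hm2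
            positivity
      _ ≤ w γ (m+1) * (1 - Real.cos ((m:ℝ)*ξ)) :=
          mul_le_mul_of_nonneg_right hw hcos0
  have hsum2 : ∑ i ∈ Finset.range n, 9/64 * (2-γ) * c₀ * ξ^2 * ((K+i:ℕ):ℝ)⁻¹
      ≤ ∑ i ∈ Finset.range n, w γ ((b+i)+3) * (1 - Real.cos ((((b+i)+2:ℕ):ℝ)*ξ)) :=
    Finset.sum_le_sum hterm
  have hharm := harmonic_lower K n (by omega)
  have hKn : K + n = N + 1 := by omega
  have hfac : ∑ i ∈ Finset.range n, 9/64 * (2-γ) * c₀ * ξ^2 * ((K+i:ℕ):ℝ)⁻¹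
      = 9/64 * (2-γ) * c₀ * ξ^2 * ∑ i ∈ Finset.range n, ((K+i:ℕ):ℝ)⁻¹ := by
    rw [Finset.mul_sum]
  have hloglower : (1/2) * Real.log (1/ξ) ≤ Real.log ((K+n:ℕ)) - Real.log K := by
    have : ((K+n:ℕ):ℝ) = (N:ℝ)+1 := by rw [hKn]; push_cast; ring
    rw [this]
    linarith
  have hharm2 : (1/2) * Real.log (1/ξ) ≤ ∑ i ∈ Finset.range n, ((K+i:ℕ):ℝ)⁻¹ :=
    le_trans hloglower hharm
  have hcoef : (0:ℝ) ≤ 9/64 * (2-γ) * c₀ * ξ^2 := by positivity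
  calc 9/64 * (2-γ) * c₀ * (ξ^2 * Real.log (1/ξ))
      = 2 * (9/64 * (2-γ) * c₀ * ξ^2 * ((1/2) * Real.log (1/ξ))) := by ring
    _ ≤ 2 * (9/64 * (2-γ) * c₀ * ξ^2 * ∑ i ∈ Finset.range n, ((K+i:ℕ):ℝ)⁻¹) := by
        apply mul_le_mul_of_nonneg_left _ (by norm_num)
        exact mul_le_mul_of_nonneg_left hharm2 hcoef
    _ = 2 * ∑ i ∈ Finset.range n, 9/64 * (2-γ) * c₀ * ξ^2 * ((K+i:ℕ):ℝ)⁻¹ := by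
        rw [hfac]
    _ ≤ 2 * ∑ i ∈ Finset.range n,
          w γ ((b+i)+3) * (1 - Real.cos ((((b+i)+2:ℕ):ℝ)*ξ)) := by
        apply mul_le_mul_of_nonneg_left hsum2 (by norm_num)
    _ ≤ (qsym γ ξ).re := hsum

/-! ### Glue: from the lower bound to the limits -/

lemma qsym_even (γ ξ : ℝ) : qsym γ (-ξ) = qsym γ ξ := by
  unfold qsym
  rw [neg_neg, add_comm]

lemma qsym_lower_abs {γ : ℝ} (h1 : 1 < γ) (h2 : γ < 2) :
    ∃ c : ℝ, 0 < c ∧ ∃ δ : ℝ, 0 < δ ∧ δ ≤ 1/2 ∧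
      ∀ ξ : ℝ, |ξ| ≤ δ → c * (ξ^2 * Real.log (1/|ξ|)) ≤ (qsym γ ξ).re := by
  obtain ⟨c, hc, δ, hδ0, hδ2, h⟩ := qsym_lower h1 h2
  refine ⟨c, hc, δ, hδ0, hδ2, fun ξ hξ => ?_⟩
  rcases lt_trichotomy ξ 0 with hneg | rfl | hpos
  · have habs : |ξ| = -ξ := abs_of_neg hneg
    rw [habs] at hξ ⊢
    have := h (-ξ) (by linarith) hξ
    rw [qsym_even] at this
    calc c * (ξ^2 * Real.log (1/(-ξ))) = c * ((-ξ)^2 * Real.log (1/(-ξ))) := by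
          ring_nf
      _ ≤ (qsym γ ξ).re := this
  · simpa using qsym_re_nonneg h1 h2 0
  · rw [abs_of_pos hpos] at hξ ⊢
    exact h ξ hpos hξ

lemma tendsto_aid (C : ℝ) :
    Tendsto (fun t : ℝ => C / Real.log (1/|t|)) (𝓝 0) (𝓝 0) := by
  have key : Tendsto (fun t : ℝ => C / Real.log (1/|t|))
      (𝓝[≠] (0:ℝ) ⊔ pure 0) (𝓝 0) := by
    rw [tendsto_sup]
    constructor
    · apply Filter.Tendsto.div_atTop (tendsto_const_nhds)
      have h1 : Tendsto (fun t : ℝ => |t|⁻¹) (𝓝[≠] (0:ℝ)) atTop :=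
        tendsto_inv_nhdsGT_zero.comp tendsto_abs_nhdsNE_zero
      simp only [one_div]
      exact Real.tendsto_log_atTop.comp h1
    · have := tendsto_pure_nhds (fun t : ℝ => C / Real.log (1/|t|)) 0
      simpa using this
  rwa [nhdsNE_sup_pure] at key

section Glue

variable {α β d e ρ : ℝ}

lemma Fsym_ge_snd (hα : α ∈ Set.Ioo (1:ℝ) 2) (hβ : β ∈ Set.Ioo (1:ℝ) 2)
    (hd : 0 < d) (he : 0 < e) (hρ : 0 < ρ) (θ : ℝ × ℝ) :
    e * ρ * (qsym β θ.2).re ≤ Fsym α β d e ρ θ := by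
  have := qsym_re_nonneg hα.1 hα.2 θ.1
  unfold Fsym
  nlinarith [mul_nonneg hd.le this]

lemma Fsym_ge_fst (hα : α ∈ Set.Ioo (1:ℝ) 2) (hβ : β ∈ Set.Ioo (1:ℝ) 2)
    (hd : 0 < d) (he : 0 < e) (hρ : 0 < ρ) (θ : ℝ × ℝ) :
    d * (qsym α θ.1).re ≤ Fsym α β d e ρ θ := by
  have := qsym_re_nonneg hβ.1 hβ.2 θ.2
  unfold Fsym
  nlinarith [mul_nonneg (mul_nonneg he.le hρ.le) this]

lemma Fsym_nonneg (hα : α ∈ Set.Ioo (1:ℝ) 2) (hβ : β ∈ Set.Ioo (1:ℝ) 2)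
    (hd : 0 < d) (he : 0 < e) (hρ : 0 < ρ) (θ : ℝ × ℝ) :
    0 ≤ Fsym α β d e ρ θ := by
  have h1 := qsym_re_nonneg hα.1 hα.2 θ.1
  have h2 := qsym_re_nonneg hβ.1 hβ.2 θ.2
  unfold Fsym
  nlinarith [mul_nonneg hd.le h1, mul_nonneg (mul_nonneg he.le hρ.le) h2]

lemma master_snd (hα : α ∈ Set.Ioo (1:ℝ) 2) (hβ : β ∈ Set.Ioo (1:ℝ) 2)
    (hd : 0 < d) (he : 0 < e) (hρ : 0 < ρ) (f : ℝ × ℝ → ℝ)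
    (hf0 : ∀ θ, 0 ≤ f θ) (hfb : ∀ θ, f θ ≤ 4 * θ.2^2) :
    Tendsto (fun θ : ℝ × ℝ => f θ / Fsym α β d e ρ θ)
      (𝓝[≠] (0 : ℝ × ℝ)) (𝓝 0) := by
  obtain ⟨c, hc, δ, hδ0, hδ2, hlow⟩ := qsym_lower_abs hβ.1 hβ.2
  set C := 4 / (e * ρ * c) with hC
  apply squeeze_zero_norm' (a := fun θ : ℝ × ℝ => C / Real.log (1/|θ.2|))
  · have hball : ∀ᶠ θ : ℝ × ℝ in 𝓝[≠] (0 : ℝ × ℝ), ‖θ‖ < δ := by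
      apply eventually_nhdsWithin_of_eventually_nhds
      filter_upwards [Metric.ball_mem_nhds (0 : ℝ × ℝ) hδ0] with θ hθ
      simpa [dist_zero_right] using hθ
    filter_upwards [hball] with θ hθ
    have hθ2 : |θ.2| ≤ δ := by
      have := norm_snd_le θ
      have h2 : ‖θ.2‖ = |θ.2| := rfl
      linarith [this, hθ.le]
    have hF0 : 0 ≤ Fsym α β d e ρ θ := Fsym_nonneg hα hβ hd he hρ θ
    have hrat0 : 0 ≤ f θ / Fsym α β d e ρ θ := div_nonneg (hf0 θ) hF0
    rw [Real.norm_eq_abs, abs_of_nonneg hrat0]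
    rcases eq_or_ne θ.2 0 with h0 | h0
    · have : f θ = 0 := le_antisymm (by simpa [h0] using hfb θ) (hf0 θ)
      simp [this, h0]
    · have hL : 0 < Real.log (1/|θ.2|) := by
        apply Real.log_pos
        rw [lt_div_iff₀ (abs_pos.mpr h0)]
        have : |θ.2| ≤ 1/2 := le_trans hθ2 hδ2
        linarith
      have hq := hlow θ.2 hθ2
      have hD : 0 < e * ρ * (c * (θ.2^2 * Real.log (1/|θ.2|))) := by
        have : (0:ℝ) < θ.2^2 := by positivity
        positivity
      have hDF : e * ρ * (c * (θ.2^2 * Real.log (1/|θ.2|))) ≤ Fsym α β d e ρ θ := by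
        calc e * ρ * (c * (θ.2^2 * Real.log (1/|θ.2|)))
            ≤ e * ρ * (qsym β θ.2).re := by
              apply mul_le_mul_of_nonneg_left hq (by positivity)
          _ ≤ Fsym α β d e ρ θ := Fsym_ge_snd hα hβ hd he hρ θ
      calc f θ / Fsym α β d e ρ θ
          ≤ (4 * θ.2^2) / (e * ρ * (c * (θ.2^2 * Real.log (1/|θ.2|)))) := by
            apply div_le_div₀ (by positivity) (hfb θ) hD hDF
        _ = C / Real.log (1/|θ.2|) := by
            rw [hC]
            have h2 : θ.2^2 ≠ 0 := by positivity
            field_simp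
  · have hcomp : Tendsto (fun θ : ℝ × ℝ => θ.2) (𝓝[≠] (0 : ℝ × ℝ)) (𝓝 0) :=
      (continuous_snd.tendsto _).mono_left nhdsWithin_le_nhds
    exact (tendsto_aid C).comp hcomp

lemma master_fst (hα : α ∈ Set.Ioo (1:ℝ) 2) (hβ : β ∈ Set.Ioo (1:ℝ) 2)
    (hd : 0 < d) (he : 0 < e) (hρ : 0 < ρ) (f : ℝ × ℝ → ℝ)
    (hf0 : ∀ θ, 0 ≤ f θ) (hfb : ∀ θ, f θ ≤ 4 * θ.1^2) :
    Tendsto (fun θ : ℝ × ℝ => f θ / Fsym α β d e ρ θ)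
      (𝓝[≠] (0 : ℝ × ℝ)) (𝓝 0) := by
  obtain ⟨c, hc, δ, hδ0, hδ2, hlow⟩ := qsym_lower_abs hα.1 hα.2
  set C := 4 / (d * c) with hC
  apply squeeze_zero_norm' (a := fun θ : ℝ × ℝ => C / Real.log (1/|θ.1|))
  · have hball : ∀ᶠ θ : ℝ × ℝ in 𝓝[≠] (0 : ℝ × ℝ), ‖θ‖ < δ := by
      apply eventually_nhdsWithin_of_eventually_nhds
      filter_upwards [Metric.ball_mem_nhds (0 : ℝ × ℝ) hδ0] with θ hθ
      simpa [dist_zero_right] using hθ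
    filter_upwards [hball] with θ hθ
    have hθ1 : |θ.1| ≤ δ := by
      have := norm_fst_le θ
      have h2 : ‖θ.1‖ = |θ.1| := rfl
      linarith [this, hθ.le]
    have hF0 : 0 ≤ Fsym α β d e ρ θ := Fsym_nonneg hα hβ hd he hρ θ
    have hrat0 : 0 ≤ f θ / Fsym α β d e ρ θ := div_nonneg (hf0 θ) hF0
    rw [Real.norm_eq_abs, abs_of_nonneg hrat0]
    rcases eq_or_ne θ.1 0 with h0 | h0
    · have : f θ = 0 := le_antisymm (by simpa [h0] using hfb θ) (hf0 θ)
      simp [this, h0]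
    · have hL : 0 < Real.log (1/|θ.1|) := by
        apply Real.log_pos
        rw [lt_div_iff₀ (abs_pos.mpr h0)]
        have : |θ.1| ≤ 1/2 := le_trans hθ1 hδ2
        linarith
      have hq := hlow θ.1 hθ1
      have hD : 0 < d * (c * (θ.1^2 * Real.log (1/|θ.1|))) := by
        have : (0:ℝ) < θ.1^2 := by positivity
        positivity
      have hDF : d * (c * (θ.1^2 * Real.log (1/|θ.1|))) ≤ Fsym α β d e ρ θ := by
        calc d * (c * (θ.1^2 * Real.log (1/|θ.1|)))
            ≤ d * (qsym α θ.1).re := by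
              apply mul_le_mul_of_nonneg_left hq (by positivity)
          _ ≤ Fsym α β d e ρ θ := Fsym_ge_fst hα hβ hd he hρ θ
      calc f θ / Fsym α β d e ρ θ
          ≤ (4 * θ.1^2) / (d * (c * (θ.1^2 * Real.log (1/|θ.1|)))) := by
            apply div_le_div₀ (by positivity) (hfb θ) hD hDF
        _ = C / Real.log (1/|θ.1|) := by
            rw [hC]
            have h2 : θ.1^2 ≠ 0 := by positivity
            field_simp
  · have hcomp : Tendsto (fun θ : ℝ × ℝ => θ.1) (𝓝[≠] (0 : ℝ × ℝ)) (𝓝 0) :=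
      (continuous_fst.tendsto _).mono_left nhdsWithin_le_nhds
    exact (tendsto_aid C).comp hcomp

end Glue

/-! ### Numerator bounds -/

lemma num_nonneg (s t : ℝ) (hs : -1 ≤ s) (ht : t ≤ 1) : 0 ≤ (1+s) * (1-t) := by
  nlinarith

lemma num_le (t b : ℝ) (ht0 : 0 ≤ t) (ht2 : t ≤ 2) :
    t * (1 - Real.cos b) ≤ 4 * b^2 := by
  have h1 := Real.one_sub_sq_div_two_le_cos (x := b)
  have h2 := Real.cos_le_one b
  nlinarith

lemma num_sq_le (t b : ℝ) (ht0 : 0 ≤ t) (ht2 : t ≤ 2) :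
    (t * (1 - Real.cos b))^2 ≤ 4 * b^2 := by
  have h1 := Real.one_sub_sq_div_two_le_cos (x := b)
  have h2 := Real.cos_le_one b
  have h0 := Real.neg_one_le_cos b
  have h3 : (1 - Real.cos b)^2 ≤ b^2 := by
    have hm : (1 - Real.cos b) * (1 - Real.cos b) ≤ 2 * (b^2/2) :=
      mul_le_mul (by linarith) (by linarith) (by linarith) (by norm_num)
    nlinarith
  have h4 : t^2 ≤ 4 := by nlinarith
  calc (t * (1 - Real.cos b))^2 = t^2 * (1 - Real.cos b)^2 := by ring
    _ ≤ 4 * b^2 := by nlinarith [sq_nonneg (1 - Real.cos b), sq_nonneg t]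

/-- The bilinear-interpolation symbol satisfies the mirror-point conditions with
constant `0`: for each of the three mirror-point maps `y(θ)`, both
`p(y(θ))/𝓕_{(α,β)}(θ) → 0` and `p(y(θ))²/𝓕_{(α,β)}(θ) → 0` as `θ → (0,0)`,
i.e. both the two-grid condition and the stronger V-cycle condition hold with `c = 0`. -/
theorem bilinear_symbol_mirror_conditions (α β d e ρ : ℝ)
    (hα : α ∈ Set.Ioo (1 : ℝ) 2) (hβ : β ∈ Set.Ioo (1 : ℝ) 2)
    (hd : 0 < d) (he : 0 < e) (hρ : 0 < ρ) :
    Tendsto (fun θ : ℝ × ℝ => pfun (θ.1, Real.pi - θ.2) / Fsym α β d e ρ θ)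
      (𝓝[≠] (0 : ℝ × ℝ)) (𝓝 0) ∧
    Tendsto (fun θ : ℝ × ℝ => pfun (Real.pi - θ.1, θ.2) / Fsym α β d e ρ θ)
      (𝓝[≠] (0 : ℝ × ℝ)) (𝓝 0) ∧
    Tendsto (fun θ : ℝ × ℝ => pfun (Real.pi - θ.1, Real.pi - θ.2) / Fsym α β d e ρ θ)
      (𝓝[≠] (0 : ℝ × ℝ)) (𝓝 0) ∧
    Tendsto (fun θ : ℝ × ℝ => pfun (θ.1, Real.pi - θ.2) ^ 2 / Fsym α β d e ρ θ)
      (𝓝[≠] (0 : ℝ × ℝ)) (𝓝 0) ∧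
    Tendsto (fun θ : ℝ × ℝ => pfun (Real.pi - θ.1, θ.2) ^ 2 / Fsym α β d e ρ θ)
      (𝓝[≠] (0 : ℝ × ℝ)) (𝓝 0) ∧
    Tendsto (fun θ : ℝ × ℝ => pfun (Real.pi - θ.1, Real.pi - θ.2) ^ 2 / Fsym α β d e ρ θ)
      (𝓝[≠] (0 : ℝ × ℝ)) (𝓝 0) := by
  have hp1 : ∀ θ : ℝ × ℝ, pfun (θ.1, Real.pi - θ.2)
      = (1 + Real.cos θ.1) * (1 - Real.cos θ.2) := by
    intro θ; unfold pfun; simp only [Real.cos_pi_sub]; ring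
  have hp2 : ∀ θ : ℝ × ℝ, pfun (Real.pi - θ.1, θ.2)
      = (1 + Real.cos θ.2) * (1 - Real.cos θ.1) := by
    intro θ; unfold pfun; simp only [Real.cos_pi_sub]; ring
  have hp3 : ∀ θ : ℝ × ℝ, pfun (Real.pi - θ.1, Real.pi - θ.2)
      = (1 - Real.cos θ.1) * (1 - Real.cos θ.2) := by
    intro θ; unfold pfun; simp only [Real.cos_pi_sub]; ring
  have hbase : ∀ x : ℝ, 0 ≤ 1 + Real.cos x ∧ 1 + Real.cos x ≤ 2
      ∧ 0 ≤ 1 - Real.cos x ∧ 1 - Real.cos x ≤ 2 := by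
    intro x
    have h1 := Real.cos_le_one x
    have h2 := Real.neg_one_le_cos x
    exact ⟨by linarith, by linarith, by linarith, by linarith⟩
  refine ⟨?_, ?_, ?_, ?_, ?_, ?_⟩
  · apply master_snd hα hβ hd he hρ
    · intro θ
      rw [hp1]
      exact num_nonneg _ _ (Real.neg_one_le_cos _) (Real.cos_le_one _)
    · intro θ
      rw [hp1]
      exact num_le _ _ (hbase θ.1).1 (hbase θ.1).2.1
  · apply master_fst hα hβ hd he hρ
    · intro θ
      rw [hp2]
      exact num_nonneg _ _ (Real.neg_one_le_cos _) (Real.cos_le_one _)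
    · intro θ
      rw [hp2]
      exact num_le _ _ (hbase θ.2).1 (hbase θ.2).2.1
  · apply master_snd hα hβ hd he hρ
    · intro θ
      rw [hp3]
      have h := hbase θ.1
      have h' := hbase θ.2
      nlinarith [h.2.2.1, h'.2.2.1]
    · intro θ
      rw [hp3]
      exact num_le _ _ (hbase θ.1).2.2.1 (hbase θ.1).2.2.2
  · apply master_snd hα hβ hd he hρ
    · intro θ; exact sq_nonneg _
    · intro θ
      rw [hp1]
      exact num_sq_le _ _ (hbase θ.1).1 (hbase θ.1).2.1
  · apply master_fst hα hβ hd he hρ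
    · intro θ; exact sq_nonneg _
    · intro θ
      rw [hp2]
      exact num_sq_le _ _ (hbase θ.2).1 (hbase θ.2).2.1
  · apply master_snd hα hβ hd he hρ
    · intro θ; exact sq_nonneg _
    · intro θ
      rw [hp3]
      exact num_sq_le _ _ (hbase θ.1).2.2.1 (hbase θ.1).2.2.2
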